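/- arXiv:2309.00659 — 4 statements merged into one kernel-verified Lean document; each statement's English description precedes it below -/
import Mathlib

section
/- For any nonnegative integer n and complex numbers a, b, q with |q|<1: sum_{k=0}^n (a;q)_k (b;q)_k / (q;q)_k * (-ab)^{n-k} * q^{binom(n,2)-binom(k,2)} = (a;q)_{n+1} * sum_{k=0}^n (-b)^k q^{binom(k,2)} / ((q;q)_k (q;q)_{n-k} (1 - a q^{n-k})). (Carlitz's identity, 1974) -/
open Finset

/-- The q-Pochhammer symbol `(a; q)_n = ∏_{j=0}^{n-1} (1 - a q^j)`. -/
noncomputable def qPoch (a q : ℂ) (n : ℕ) : ℂ := ∏ j ∈ Finset.range n, (1 - a * q ^ j)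

lemma qPoch_zero (a q : ℂ) : qPoch a q 0 = 1 := by simp [qPoch]

lemma qPoch_succ (a q : ℂ) (n : ℕ) :
    qPoch a q (n + 1) = qPoch a q n * (1 - a * q ^ n) := by
  simp [qPoch, Finset.prod_range_succ]

lemma qPoch_q_succ (q : ℂ) (n : ℕ) :
    qPoch q q (n + 1) = qPoch q q n * (1 - q ^ (n + 1)) := by
  rw [qPoch_succ]; ring

lemma one_sub_pow_ne_zero {q : ℂ} (hq : ‖q‖ < 1) (j : ℕ) :
    1 - q ^ (j + 1) ≠ 0 := by
  intro h
  have h1 : q ^ (j + 1) = 1 := by linear_combination -h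
  have h2 : ‖q ^ (j + 1)‖ < 1 := by
    rw [norm_pow]
    exact pow_lt_one₀ (norm_nonneg q) hq (Nat.succ_ne_zero j)
  rw [h1] at h2; simp at h2

lemma qPoch_q_ne_zero {q : ℂ} (hq : ‖q‖ < 1) (n : ℕ) :
    qPoch q q n ≠ 0 := by
  rw [qPoch]
  apply Finset.prod_ne_zero_iff.mpr
  intro j _
  have h := one_sub_pow_ne_zero hq j
  rwa [pow_succ'] at h

lemma choose_two_succ (k : ℕ) : (k + 1).choose 2 = k.choose 2 + k := by
  simp [Nat.choose_succ_succ, Nat.choose_one_right, Nat.add_comm]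

/-- clear denominators: `c * (A/X) = A/Y + B/Z`. -/
lemma div_helper3 (c A B X Y Z : ℂ) (hX : X ≠ 0) (hY : Y ≠ 0) (hZ : Z ≠ 0)
    (h : c * A * (Y * Z) = A * (X * Z) + B * (X * Y)) :
    c * (A / X) = A / Y + B / Z := by
  rw [← mul_div_assoc, div_add_div _ _ hY hZ, div_eq_div_iff hX (mul_ne_zero hY hZ)]
  linear_combination h

/-- clear denominators: `c * (A/X) + E/Y = B/Z`. -/
lemma div_helper3' (c A E B X Y Z : ℂ) (hX : X ≠ 0) (hY : Y ≠ 0) (hZ : Z ≠ 0)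
    (h : c * A * (Y * Z) + E * (X * Z) = B * (X * Y)) :
    c * (A / X) + E / Y = B / Z := by
  rw [← mul_div_assoc, div_add_div _ _ hX hY, div_eq_div_iff (mul_ne_zero hX hY) hZ]
  linear_combination h

lemma div_helper1 (c A Y : ℂ) (hc : c ≠ 0) : c * (A / (Y * c)) = A / Y := by
  rw [← mul_div_assoc, mul_comm Y c]
  exact mul_div_mul_left _ _ hc

lemma gauss_sum (b q : ℂ) (hq : ‖q‖ < 1) (n : ℕ) :
    qPoch b q n / qPoch q q n
      = ∑ k ∈ range (n + 1),
          (-b) ^ k * q ^ (k.choose 2) / (qPoch q q k * qPoch q q (n - k)) := by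
  induction n with
  | zero => simp [qPoch]
  | succ n ih =>
    have hP : ∀ m : ℕ, qPoch q q m ≠ 0 := qPoch_q_ne_zero hq
    have h1 : (1 : ℂ) - q ^ (n + 1) ≠ 0 := one_sub_pow_ne_zero hq n
    set G : ℕ → ℂ := fun k => (1 - q ^ (n + 1)) *
      ((-b) ^ k * q ^ (k.choose 2) / (qPoch q q k * qPoch q q (n + 1 - k))) with hG
    set f : ℕ → ℂ := fun k =>
      (-b) ^ k * q ^ (k.choose 2) / (qPoch q q k * qPoch q q (n - k)) with hf
    set e : ℕ → ℂ := fun k =>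
      (-b) ^ (k + 1) * q ^ ((k + 1).choose 2 + (n - k)) / (qPoch q q k * qPoch q q (n - k)) with he
    have claim0 : G 0 = f 0 := by
      simp only [hG, hf, Nat.sub_zero, qPoch_zero, qPoch_q_succ, one_mul]
      exact div_helper1 _ _ _ h1
    have claim2 : G (n + 1) = e n := by
      simp only [hG, he, Nat.sub_self, Nat.add_zero, qPoch_zero, qPoch_q_succ, mul_one]
      exact div_helper1 _ _ _ h1
    have claim1 : ∀ k ∈ range n, G (k + 1) = f (k + 1) + e k := by
      intro k hk
      rw [mem_range] at hk
      simp only [hG, hf, he]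
      obtain ⟨m, rfl⟩ : ∃ m, n = k + 1 + m := ⟨n - (k + 1), by omega⟩
      have e1 : k + 1 + m + 1 - (k + 1) = m + 1 := by omega
      have e2 : k + 1 + m - (k + 1) = m := by omega
      have e3 : k + 1 + m - k = m + 1 := by omega
      have e4 : k + 1 + m + 1 = (k + 1) + (m + 1) := by omega
      rw [e1, e2, e3, e4]
      have hk1 : (1 : ℂ) - q ^ (k + 1) ≠ 0 := one_sub_pow_ne_zero hq k
      have hm1 : (1 : ℂ) - q ^ (m + 1) ≠ 0 := one_sub_pow_ne_zero hq m
      apply div_helper3 _ _ _ _ _ _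
        (mul_ne_zero (hP (k + 1)) (hP (m + 1))) (mul_ne_zero (hP (k + 1)) (hP m))
        (mul_ne_zero (hP k) (hP (m + 1)))
      rw [qPoch_q_succ q k, qPoch_q_succ q m, pow_add q (k + 1) (m + 1),
        pow_add q ((k + 1).choose 2) (m + 1)]
      ring
    have rhs : ∀ k ∈ range (n + 1), (1 - b * q ^ n) * f k = f k + e k := by
      intro k hk
      rw [mem_range] at hk
      simp only [hf, he]
      have hc : (k + 1).choose 2 + (n - k) = k.choose 2 + n := by
        have := choose_two_succ k; omega
      rw [hc, pow_add q (k.choose 2) n, pow_succ (-b) k]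
      have hk2 : q ^ n = q ^ k * q ^ (n - k) := by
        rw [← pow_add]; congr 1; omega
      rw [hk2]
      ring
    have key : (1 - q ^ (n + 1)) *
        ∑ k ∈ range (n + 1 + 1),
          (-b) ^ k * q ^ (k.choose 2) / (qPoch q q k * qPoch q q (n + 1 - k))
        = (1 - b * q ^ n) * ∑ k ∈ range (n + 1), f k := by
      calc (1 - q ^ (n + 1)) *
          ∑ k ∈ range (n + 1 + 1),
            (-b) ^ k * q ^ (k.choose 2) / (qPoch q q k * qPoch q q (n + 1 - k))
          = ∑ k ∈ range (n + 1 + 1), G k := by rw [Finset.mul_sum]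
        _ = (∑ k ∈ range (n + 1), G (k + 1)) + G 0 := Finset.sum_range_succ' G (n + 1)
        _ = ((∑ k ∈ range n, G (k + 1)) + G (n + 1)) + G 0 := by
            rw [Finset.sum_range_succ (fun k => G (k + 1))]
        _ = ((∑ k ∈ range n, (f (k + 1) + e k)) + e n) + f 0 := by
            rw [Finset.sum_congr rfl claim1, claim0, claim2]
        _ = ((∑ k ∈ range n, f (k + 1)) + f 0) + ((∑ k ∈ range n, e k) + e n) := by
            rw [Finset.sum_add_distrib]; ring
        _ = (∑ k ∈ range (n + 1), f k) + ∑ k ∈ range (n + 1), e k := by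
            rw [← Finset.sum_range_succ' f n, ← Finset.sum_range_succ e n]
        _ = ∑ k ∈ range (n + 1), (f k + e k) := by rw [Finset.sum_add_distrib]
        _ = ∑ k ∈ range (n + 1), (1 - b * q ^ n) * f k := (Finset.sum_congr rfl rhs).symm
        _ = (1 - b * q ^ n) * ∑ k ∈ range (n + 1), f k := by rw [Finset.mul_sum]
    have final : (1 - q ^ (n + 1)) * (qPoch b q (n + 1) / qPoch q q (n + 1))
        = (1 - q ^ (n + 1)) *
          ∑ k ∈ range (n + 1 + 1),
            (-b) ^ k * q ^ (k.choose 2) / (qPoch q q k * qPoch q q (n + 1 - k)) := by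
      rw [key, ← ih, qPoch_succ b, qPoch_q_succ q]
      have hPn := hP n
      field_simp
    exact (mul_left_cancel₀ h1 final)

/-- clear denominators: `c * (A/X) + d * (A'/Y) = B/Z`. -/
lemma div_helper4 (c A d A' B X Y Z : ℂ) (hX : X ≠ 0) (hY : Y ≠ 0) (hZ : Z ≠ 0)
    (h : c * A * (Y * Z) + d * A' * (X * Z) = B * (X * Y)) :
    c * (A / X) + d * (A' / Y) = B / Z := by
  rw [← mul_div_assoc, ← mul_div_assoc, div_add_div _ _ hX hY,
    div_eq_div_iff (mul_ne_zero hX hY) hZ]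
  linear_combination h

lemma T_step (a b q : ℂ) (hq : ‖q‖ < 1) (n : ℕ)
    (ha : ∀ j ≤ n + 1, a * q ^ j ≠ 1) :
    (1 - a * q ^ (n + 1)) *
      ∑ k ∈ range (n + 1 + 1),
        (-b) ^ k * q ^ (k.choose 2)
          / (qPoch q q k * qPoch q q (n + 1 - k) * (1 - a * q ^ (n + 1 - k)))
    + a * b * q ^ n *
      ∑ k ∈ range (n + 1),
        (-b) ^ k * q ^ (k.choose 2)
          / (qPoch q q k * qPoch q q (n - k) * (1 - a * q ^ (n - k)))
    = ∑ k ∈ range (n + 1 + 1),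
        (-b) ^ k * q ^ (k.choose 2) / (qPoch q q k * qPoch q q (n + 1 - k)) := by
  have hP : ∀ m : ℕ, qPoch q q m ≠ 0 := qPoch_q_ne_zero hq
  have hA : ∀ j ≤ n + 1, (1 : ℂ) - a * q ^ j ≠ 0 := fun j hj =>
    sub_ne_zero_of_ne (Ne.symm (ha j hj))
  set U : ℕ → ℂ := fun k => (1 - a * q ^ (n + 1)) *
    ((-b) ^ k * q ^ (k.choose 2)
      / (qPoch q q k * qPoch q q (n + 1 - k) * (1 - a * q ^ (n + 1 - k)))) with hU
  set E : ℕ → ℂ := fun k => a * b * q ^ n *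
    ((-b) ^ k * q ^ (k.choose 2)
      / (qPoch q q k * qPoch q q (n - k) * (1 - a * q ^ (n - k)))) with hE
  set F : ℕ → ℂ := fun k =>
    (-b) ^ k * q ^ (k.choose 2) / (qPoch q q k * qPoch q q (n + 1 - k)) with hF
  have claimB : U 0 = F 0 := by
    simp only [hU, hF, Nat.sub_zero, qPoch_zero, one_mul]
    exact div_helper1 _ _ _ (hA (n + 1) le_rfl)
  have claimA : ∀ k ∈ range (n + 1), U (k + 1) + E k = F (k + 1) := by
    intro k hk
    rw [mem_range] at hk
    simp only [hU, hE, hF]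
    obtain ⟨m, rfl⟩ : ∃ m, n = k + m := ⟨n - k, by omega⟩
    have e1 : k + m + 1 - (k + 1) = m := by omega
    have e2 : k + m - k = m := by omega
    rw [e1, e2]
    have hm : (1 : ℂ) - a * q ^ m ≠ 0 := hA m (by omega)
    apply div_helper4 _ _ _ _ _ _ _ _
      (mul_ne_zero (mul_ne_zero (hP (k + 1)) (hP m)) hm)
      (mul_ne_zero (mul_ne_zero (hP k) (hP m)) hm)
      (mul_ne_zero (hP (k + 1)) (hP m))
    rw [qPoch_q_succ q k, choose_two_succ k, pow_add q (k.choose 2) k,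
      pow_add q (k + m) 1, pow_add q k m]
    ring
  calc (1 - a * q ^ (n + 1)) *
      ∑ k ∈ range (n + 1 + 1),
        (-b) ^ k * q ^ (k.choose 2)
          / (qPoch q q k * qPoch q q (n + 1 - k) * (1 - a * q ^ (n + 1 - k)))
      + a * b * q ^ n *
      ∑ k ∈ range (n + 1),
        (-b) ^ k * q ^ (k.choose 2)
          / (qPoch q q k * qPoch q q (n - k) * (1 - a * q ^ (n - k)))
      = (∑ k ∈ range (n + 1 + 1), U k) + ∑ k ∈ range (n + 1), E k := by
        rw [Finset.mul_sum, Finset.mul_sum]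
    _ = ((∑ k ∈ range (n + 1), U (k + 1)) + U 0) + ∑ k ∈ range (n + 1), E k := by
        rw [Finset.sum_range_succ' U (n + 1)]
    _ = (∑ k ∈ range (n + 1), (U (k + 1) + E k)) + U 0 := by
        rw [Finset.sum_add_distrib]; ring
    _ = (∑ k ∈ range (n + 1), F (k + 1)) + F 0 := by
        rw [Finset.sum_congr rfl claimA, claimB]
    _ = ∑ k ∈ range (n + 1 + 1), F k := (Finset.sum_range_succ' F (n + 1)).symm

lemma main_rec (a b q : ℂ) (hq : ‖q‖ < 1) (n : ℕ)
    (ha : ∀ j ≤ n + 1, a * q ^ j ≠ 1) :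
    qPoch a q (n + 1 + 1) *
      ∑ k ∈ range (n + 1 + 1),
        (-b) ^ k * q ^ (k.choose 2)
          / (qPoch q q k * qPoch q q (n + 1 - k) * (1 - a * q ^ (n + 1 - k)))
    = qPoch a q (n + 1) * qPoch b q (n + 1) / qPoch q q (n + 1)
      + -(a * b) * q ^ n *
        (qPoch a q (n + 1) *
          ∑ k ∈ range (n + 1),
            (-b) ^ k * q ^ (k.choose 2)
              / (qPoch q q k * qPoch q q (n - k) * (1 - a * q ^ (n - k)))) := by
  have h1 := T_step a b q hq n ha
  have h2 := gauss_sum b q hq (n + 1)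
  rw [qPoch_succ a q (n + 1)]
  linear_combination qPoch a q (n + 1) * h1 - qPoch a q (n + 1) * h2

/-- Carlitz's identity (1974). -/
theorem carlitz_identity (n : ℕ) (a b q : ℂ) (hq : ‖q‖ < 1)
    (ha : ∀ j ≤ n, a * q ^ j ≠ 1) :
    ∑ k ∈ range (n + 1),
        qPoch a q k * qPoch b q k / qPoch q q k * (-(a * b)) ^ (n - k)
          * q ^ (n.choose 2 - k.choose 2)
      = qPoch a q (n + 1) *
        ∑ k ∈ range (n + 1),
          (-b) ^ k * q ^ (k.choose 2)
            / (qPoch q q k * qPoch q q (n - k) * (1 - a * q ^ (n - k))) := by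
  induction n with
  | zero =>
      have h0 : (1 : ℂ) - a ≠ 0 := by
        have h := ha 0 le_rfl
        rw [pow_zero, mul_one] at h
        exact sub_ne_zero_of_ne (Ne.symm h)
      rw [Finset.sum_range_one, Finset.sum_range_one]
      simp only [Nat.sub_zero, Nat.sub_self, pow_zero, qPoch_zero, qPoch_succ, mul_one, one_mul]
      have : (Nat.choose 0 2) = 0 := rfl
      rw [this, pow_zero]
      field_simp
  | succ n ih =>
      have ha' : ∀ j ≤ n, a * q ^ j ≠ 1 := fun j hj => ha j (by omega)
      have per : ∀ k ∈ range (n + 1),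
          qPoch a q k * qPoch b q k / qPoch q q k * (-(a * b)) ^ (n + 1 - k)
            * q ^ ((n + 1).choose 2 - k.choose 2)
          = -(a * b) * q ^ n *
            (qPoch a q k * qPoch b q k / qPoch q q k * (-(a * b)) ^ (n - k)
              * q ^ (n.choose 2 - k.choose 2)) := by
        intro k hk
        rw [mem_range] at hk
        have hnk : n + 1 - k = (n - k) + 1 := by omega
        have hcle : k.choose 2 ≤ n.choose 2 := Nat.choose_le_choose 2 (by omega)
        have hch : (n + 1).choose 2 - k.choose 2 = n + (n.choose 2 - k.choose 2) := by
          have := choose_two_succ n; omega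
        rw [hnk, hch, pow_add, pow_succ, pow_add]
        ring
      calc ∑ k ∈ range (n + 1 + 1),
            qPoch a q k * qPoch b q k / qPoch q q k * (-(a * b)) ^ (n + 1 - k)
              * q ^ ((n + 1).choose 2 - k.choose 2)
          = (∑ k ∈ range (n + 1),
              qPoch a q k * qPoch b q k / qPoch q q k * (-(a * b)) ^ (n + 1 - k)
                * q ^ ((n + 1).choose 2 - k.choose 2))
            + qPoch a q (n + 1) * qPoch b q (n + 1) / qPoch q q (n + 1)
              * (-(a * b)) ^ (n + 1 - (n + 1)) * q ^ ((n + 1).choose 2 - (n + 1).choose 2) := by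
            rw [Finset.sum_range_succ]
        _ = (∑ k ∈ range (n + 1), -(a * b) * q ^ n *
              (qPoch a q k * qPoch b q k / qPoch q q k * (-(a * b)) ^ (n - k)
                * q ^ (n.choose 2 - k.choose 2)))
            + qPoch a q (n + 1) * qPoch b q (n + 1) / qPoch q q (n + 1) := by
            rw [Finset.sum_congr rfl per, Nat.sub_self, Nat.sub_self, pow_zero, pow_zero,
              mul_one, mul_one]
        _ = -(a * b) * q ^ n *
              (∑ k ∈ range (n + 1),
                qPoch a q k * qPoch b q k / qPoch q q k * (-(a * b)) ^ (n - k)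
                  * q ^ (n.choose 2 - k.choose 2))
            + qPoch a q (n + 1) * qPoch b q (n + 1) / qPoch q q (n + 1) := by
            rw [Finset.mul_sum]
        _ = -(a * b) * q ^ n *
              (qPoch a q (n + 1) *
                ∑ k ∈ range (n + 1),
                  (-b) ^ k * q ^ (k.choose 2)
                    / (qPoch q q k * qPoch q q (n - k) * (1 - a * q ^ (n - k))))
            + qPoch a q (n + 1) * qPoch b q (n + 1) / qPoch q q (n + 1) := by
            rw [ih ha']
        _ = qPoch a q (n + 1 + 1) *
              ∑ k ∈ range (n + 1 + 1),
                (-b) ^ k * q ^ (k.choose 2)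
                  / (qPoch q q k * qPoch q q (n + 1 - k) * (1 - a * q ^ (n + 1 - k))) := by
            rw [main_rec a b q hq n ha]; ring
end

section
/- Let phi_n(a,b) = (q;q)_n / (a;q)_{n+1} * sum_{k=0}^n (a;q)_k (b;q)_k / (q;q)_k * (-ab)^{n-k} * q^{binom(n,2)-binom(k,2)}. Then phi_n(a,b) = phi_{n-1}(aq, b) - b q^{n-1} phi_{n-1}(a,b) for all n ≥ 1. -/
open Finset

/-- `φ_n(a,b) = (q;q)_n/(a;q)_{n+1} ∑_{k=0}^n (a,b;q)_k/(q;q)_k (-ab)^{n-k} q^{C(n,2)-C(k,2)}`. -/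
noncomputable def phi (q a b : ℂ) (n : ℕ) : ℂ :=
  qPoch q q n / qPoch a q (n + 1) *
    ∑ k ∈ range (n + 1),
      qPoch a q k * qPoch b q k / qPoch q q k * (-(a * b)) ^ (n - k)
        * q ^ (n.choose 2 - k.choose 2)

noncomputable def Ssum (q a b : ℂ) (n : ℕ) : ℂ :=
  ∑ k ∈ range (n + 1),
      qPoch a q k * qPoch b q k / qPoch q q k * (-(a * b)) ^ (n - k)
        * q ^ (n.choose 2 - k.choose 2)

lemma phi_eq (q a b : ℂ) (n : ℕ) :
    phi q a b n = qPoch q q n / qPoch a q (n + 1) * Ssum q a b n := rfl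

lemma qPoch_shift (a q : ℂ) (n : ℕ) :
    qPoch a q (n + 1) = (1 - a) * qPoch (a * q) q n := by
  simp only [qPoch]
  rw [Finset.prod_range_succ']
  simp only [pow_zero, mul_one, pow_succ]
  rw [mul_comm]
  congr 1
  exact Finset.prod_congr rfl fun j _ => by ring

lemma qPoch_ne_zero {a q : ℂ} {n : ℕ} (ha : ∀ j < n, a * q ^ j ≠ 1) :
    qPoch a q n ≠ 0 := by
  rw [qPoch]
  apply Finset.prod_ne_zero_iff.mpr
  intro j hj h
  exact ha j (Finset.mem_range.mp hj) (by linear_combination -h)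

lemma q_pow_ne_one {q : ℂ} (hq : ‖q‖ < 1) (j : ℕ) : q * q ^ j ≠ 1 := by
  intro h
  have h1 : ‖q * q ^ j‖ < 1 := by
    rw [norm_mul, norm_pow]
    calc ‖q‖ * ‖q‖ ^ j ≤ ‖q‖ * 1 := by
          apply mul_le_mul_of_nonneg_left (pow_le_one₀ (by positivity) hq.le) (by positivity)
      _ = ‖q‖ := mul_one _
      _ < 1 := hq
  rw [h] at h1
  simp at h1

lemma Ssum_succ (q a b : ℂ) (m : ℕ) :
    Ssum q a b (m + 1) = qPoch a q (m + 1) * qPoch b q (m + 1) / qPoch q q (m + 1)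
      + (-(a * b)) * q ^ m * Ssum q a b m := by
  rw [Ssum, Finset.sum_range_succ, Nat.sub_self, Nat.sub_self, pow_zero, pow_zero,
    mul_one, mul_one, Ssum, Finset.mul_sum, add_comm]
  congr 1
  apply Finset.sum_congr rfl
  intro k hk
  have hk' : k ≤ m := Nat.lt_succ_iff.mp (Finset.mem_range.mp hk)
  have hc : k.choose 2 ≤ m.choose 2 := Nat.choose_le_choose 2 hk'
  have hcs : (m + 1).choose 2 = m.choose 2 + m := by
    have h := Nat.choose_succ_succ m 1
    simp [Nat.choose_one_right] at h
    omega
  have h1 : m + 1 - k = (m - k) + 1 := by omega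
  have h2 : (m + 1).choose 2 - k.choose 2 = (m.choose 2 - k.choose 2) + m := by omega
  rw [h1, h2, pow_succ, pow_add]
  ring

lemma star_identity (q b : ℂ) (hq : ‖q‖ < 1) (m : ℕ) : ∀ a : ℂ,
    Ssum q (a * q) b m - b * q ^ m * Ssum q a b m
      = qPoch (a * q) q m * qPoch b q (m + 1) / qPoch q q m := by
  induction m with
  | zero =>
    intro a
    simp [Ssum, qPoch_succ, qPoch]
  | succ m ih =>
    intro a
    have hS : Ssum q (a * q) b m = b * q ^ m * Ssum q a b m
        + qPoch (a * q) q m * qPoch b q (m + 1) / qPoch q q m := by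
      linear_combination ih a
    have hq0 : qPoch q q m ≠ 0 := qPoch_q_ne_zero hq m
    have hq1 : (1 : ℂ) - q * q ^ m ≠ 0 := sub_ne_zero.mpr (q_pow_ne_one hq m).symm
    rw [Ssum_succ, Ssum_succ, hS, qPoch_succ q q m, qPoch_succ b q (m + 1),
      qPoch_succ (a * q) q m, qPoch_shift a q m]
    field_simp
    ring

/-- The recurrence `φ_n(a,b) = φ_{n-1}(aq,b) - b q^{n-1} φ_{n-1}(a,b)` for `n ≥ 1`. -/
theorem phi_recurrence (n : ℕ) (hn : 1 ≤ n) (a b q : ℂ) (hq : ‖q‖ < 1)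
    (ha : ∀ j ≤ n, a * q ^ j ≠ 1) :
    phi q a b n = phi q (a * q) b (n - 1) - b * q ^ (n - 1) * phi q a b (n - 1) := by
  obtain ⟨m, rfl⟩ : ∃ m, n = m + 1 := ⟨n - 1, (Nat.succ_pred_eq_of_pos hn).symm⟩
  simp only [Nat.add_sub_cancel]
  have hS : Ssum q (a * q) b m = b * q ^ m * Ssum q a b m
      + qPoch (a * q) q m * qPoch b q (m + 1) / qPoch q q m := by
    linear_combination star_identity q b hq m a
  have hq0 : qPoch q q m ≠ 0 := qPoch_q_ne_zero hq m
  have hq1 : (1 : ℂ) - q * q ^ m ≠ 0 := sub_ne_zero.mpr (q_pow_ne_one hq m).symm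
  have h0 : (1 : ℂ) - a ≠ 0 := by
    have := ha 0 (Nat.zero_le _)
    rw [pow_zero, mul_one] at this
    exact sub_ne_zero.mpr this.symm
  have hP : qPoch (a * q) q m ≠ 0 := by
    apply qPoch_ne_zero
    intro j hj h
    apply ha (j + 1) (by omega)
    rw [pow_succ]
    linear_combination h
  have hend : (1 : ℂ) - a * q * q ^ m ≠ 0 := by
    refine sub_ne_zero.mpr fun h => ha (m + 1) le_rfl ?_
    rw [pow_succ]
    linear_combination -h
  rw [phi_eq, phi_eq, phi_eq, Ssum_succ, hS,
    qPoch_shift a q (m + 1), qPoch_succ (a * q) q m, qPoch_shift a q m,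
    qPoch_succ q q m]
  have hend' : (1 : ℂ) - q * q ^ m * a ≠ 0 := by rw [show q * q ^ m * a = a * q * q ^ m by ring]; exact hend
  have hP' : qPoch (q * a) q m ≠ 0 := by rw [mul_comm q a]; exact hP
  field_simp
  ring
end

section
/- If f(a) = (ay;q)_∞ / (ax;q)_∞, then for every nonnegative integer n, Delta_a^n f(a) = ((a y q^n;q)_∞ / (ax;q)_∞) * P_n(x,y) * (-a)^n * q^{binom(n,2)}, where Delta_a^n = (eta_a - 1)(eta_a - q)...(eta_a - q^{n-1}) and P_n(x,y) = prod_{j=0}^{n-1}(x - y q^j). -/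
open Finset Filter Topology

lemma qprod_multipliable {q : ℂ} (hq : ‖q‖ < 1) (c : ℂ) :
    Multipliable (fun j : ℕ => 1 - c * q ^ j) := by
  by_cases h : ∃ j, 1 - c * q ^ j = 0
  · obtain ⟨j0, hj0⟩ := h
    refine ⟨0, ?_⟩
    have hev : ∀ᶠ s : Finset ℕ in atTop, ∏ i ∈ s, (1 - c * q ^ i) = 0 := by
      filter_upwards [eventually_ge_atTop {j0}] with s hs
      exact Finset.prod_eq_zero (hs (Finset.mem_singleton_self j0)) hj0
    exact Filter.Tendsto.congr' (hev.mono fun s hs => hs.symm) tendsto_const_nhds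
  · push_neg at h
    apply Complex.multipliable_of_summable_log
    apply Summable.of_norm_bounded_eventually_nat
      (g := fun j => 3/2 * (‖c‖ * ‖q‖ ^ j))
      (((summable_geometric_of_lt_one (norm_nonneg q) hq).mul_left
        (‖c‖)).mul_left (3/2))
    have h2 : Tendsto (fun j : ℕ => ‖c‖ * ‖q‖ ^ j) atTop (𝓝 0) := by
      simpa using (tendsto_pow_atTop_nhds_zero_of_lt_one (norm_nonneg q)
        hq).const_mul (‖c‖)
    filter_upwards [h2.eventually_le_const (by norm_num : (0:ℝ) < 1/2)] with j hj
    have hz : ‖-(c * q ^ j)‖ ≤ 1/2 := by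
      simpa [norm_mul, norm_pow] using hj
    calc ‖Complex.log (1 - c * q ^ j)‖ = ‖Complex.log (1 + -(c * q ^ j))‖ := by
          rw [sub_eq_add_neg]
      _ ≤ 3/2 * ‖-(c * q ^ j)‖ := Complex.norm_log_one_add_half_le_self hz
      _ = 3/2 * (‖c‖ * ‖q‖ ^ j) := by
          simp [norm_mul, norm_pow]

lemma qprod_shift {q : ℂ} (hq : ‖q‖ < 1) (c : ℂ) :
    (∏' j : ℕ, (1 - c * q ^ j)) = (1 - c) * ∏' j : ℕ, (1 - c * q * q ^ j) := by
  have hm : Multipliable (fun n : ℕ => 1 - c * q ^ (n + 1)) :=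
    (qprod_multipliable hq (c * q)).congr (fun b => by rw [pow_succ]; ring)
  rw [tprod_eq_zero_mul' (f := fun j : ℕ => 1 - c * q ^ j) hm]
  congr 1
  · simp
  · exact tprod_congr fun b => by rw [pow_succ]; ring

/-- `Δ_a^k = (η_a - 1)(η_a - q) ⋯ (η_a - q^{k-1})` where `η_a f(a) = f(aq)`. -/
noncomputable def deltaOp (q : ℂ) : ℕ → (ℂ → ℂ) → (ℂ → ℂ)
  | 0, f => f
  | k + 1, f => fun a => deltaOp q k f (a * q) - q ^ k * deltaOp q k f a

theorem delta_infinite_product (q x y : ℂ) (hq0 : 0 < ‖q‖)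
    (hq : ‖q‖ < 1) (n : ℕ) (a : ℂ)
    (hx : ∀ j : ℕ, a * x * q ^ j ≠ 1) :
    deltaOp q n (fun t => (∏' j : ℕ, (1 - t * y * q ^ j)) / (∏' j : ℕ, (1 - t * x * q ^ j))) a
      = (∏' j : ℕ, (1 - a * y * q ^ n * q ^ j)) / (∏' j : ℕ, (1 - a * x * q ^ j))
          * (∏ j ∈ Finset.range n, (x - y * q ^ j)) * (-a) ^ n * q ^ (n.choose 2) := by
  induction n generalizing a with
  | zero => simp [deltaOp]
  | succ n ih =>
    have hx' : ∀ j : ℕ, a * q * x * q ^ j ≠ 1 := by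
      intro j hcon
      exact hx (j + 1) (by rw [← hcon]; ring)
    show deltaOp q n _ (a * q) - q ^ n * deltaOp q n _ a = _
    rw [ih (a * q) hx', ih a hx]
    have h1 : (1 : ℂ) - a * x ≠ 0 := by
      intro hcon
      exact hx 0 (by rw [pow_zero, mul_one]; linear_combination -hcon)
    have e1 : (∏' j : ℕ, (1 - a * q * y * q ^ n * q ^ j))
        = ∏' j : ℕ, (1 - a * y * q ^ (n + 1) * q ^ j) :=
      tprod_congr fun j => by ring_nf
    have e2 : (∏' j : ℕ, (1 - a * q * x * q ^ j))
        = (∏' j : ℕ, (1 - a * x * q ^ j)) / (1 - a * x) := by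
      rw [qprod_shift hq (a * x), mul_div_cancel_left₀ _ h1]
      exact tprod_congr fun j => by ring_nf
    have e3 : (∏' j : ℕ, (1 - a * y * q ^ n * q ^ j))
        = (1 - a * y * q ^ n) * ∏' j : ℕ, (1 - a * y * q ^ (n + 1) * q ^ j) := by
      rw [qprod_shift hq (a * y * q ^ n)]
      congr 1
      exact tprod_congr fun j => by ring_nf
    rw [e1, e2, e3]
    set A := ∏' j : ℕ, (1 - a * y * q ^ (n + 1) * q ^ j) with hA
    set B := ∏' j : ℕ, (1 - a * x * q ^ j) with hB
    rw [div_div_eq_mul_div, prod_range_succ,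
      show (n + 1).choose 2 = n.choose 2 + n by
        rw [Nat.choose_succ_succ, Nat.choose_one_right, Nat.add_comm]]
    rcases eq_or_ne B 0 with hB0 | hB0
    · simp [hB0]
    · field_simp
      ring
end

section
/- For every odd prime p and integer m with 1 ≤ m ≤ (p+1)/2: sum_{k=0}^{p-m} 2^k (m - 1/2)_k / k! ≡ (-1)^{(p-1)/2 + m - 1} (mod p), where (x)_k = x(x+1)...(x+k-1) is the rising Pochhammer symbol. Equivalently, each term 2^k (m-1/2)_k / k! = prod_{j=0}^{k-1} (2m-1+2j)/(j+1) is an integer-valued rational with denominator coprime to p. -/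
open Finset

/-- `A ≡ B (mod p^e)` in `ℤ` localized at the odd prime `p`: the difference of the
rationals can be written as `p^e · a / b` with `p ∤ b`. -/
def CongrModPrimePow (p : ℕ) (e : ℕ) (A B : ℚ) : Prop :=
  ∃ a b : ℤ, ¬ (p : ℤ) ∣ b ∧ (A - B) * (b : ℚ) = (p : ℚ) ^ e * (a : ℚ)

lemma asc_eval_prod (x : ℚ) : ∀ k : ℕ, (ascPochhammer ℚ k).eval x = ∏ j ∈ range k, (x + j)
  | 0 => by simp
  | k + 1 => by
      rw [ascPochhammer_succ_eval, asc_eval_prod x k, prod_range_succ]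

theorem rising_factorial_congruence (p : ℕ) (hp : p.Prime) (hodd : Odd p)
    (m : ℕ) (hm1 : 1 ≤ m) (hm2 : m ≤ (p + 1) / 2) :
    CongrModPrimePow p 1
      (∑ k ∈ range (p - m + 1),
        2 ^ k * (ascPochhammer ℚ k).eval ((m : ℚ) - 1 / 2) / (k.factorial : ℚ))
      ((-1) ^ ((p - 1) / 2 + m - 1)) := by
  have hpmod : p % 2 = 1 := Nat.odd_iff.mp hodd
  have hp1 : 1 ≤ p := hp.one_lt.le.trans' (by norm_num)
  set n := p - m with hn
  set K := (p + 1) / 2 - m with hK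
  set e := (p - 1) / 2 + m - 1 with he
  have hmK : m + K = (p + 1) / 2 := by omega
  have h2mK : 2 * (m + K) = p + 1 := by omega
  have hKn : K ≤ n := by omega
  have hnp : n < p := by omega
  have heK : (e + K) % 2 = 0 := by omega
  -- integer versions of the terms
  set O : ℕ → ℤ := fun k => ∏ j ∈ range k, (2 * ((m : ℤ) + j) - 1) with hO
  set D : ℕ → ℤ := fun k => ((n.descFactorial (n - k) : ℕ) : ℤ) with hD
  set X : ℤ := ∑ k ∈ range (n + 1), O k * D k with hX
  -- factorial times descFactorial
  have hfac : ∀ k, k ≤ n → (k.factorial * n.descFactorial (n - k) = n.factorial) := by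
    intro k hk
    have := Nat.factorial_mul_descFactorial (Nat.sub_le n k)
    rwa [Nat.sub_sub_self hk] at this
  -- Step A : S * n! = X
  have hstepA :
      (∑ k ∈ range (p - m + 1),
        2 ^ k * (ascPochhammer ℚ k).eval ((m : ℚ) - 1 / 2) / (k.factorial : ℚ))
        * (n.factorial : ℚ) = (X : ℚ) := by
    rw [Finset.sum_mul, hX]
    push_cast
    refine Finset.sum_congr rfl ?_
    intro k hk
    have hk' : k ≤ n := by
      have := Finset.mem_range.mp hk; omega
    have hnum : (2 : ℚ) ^ k * (ascPochhammer ℚ k).eval ((m : ℚ) - 1 / 2)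
        = ((O k : ℤ) : ℚ) := by
      rw [asc_eval_prod]
      simp only [hO]
      push_cast
      have h2k : (2 : ℚ) ^ k = ∏ _j ∈ range k, (2 : ℚ) := by simp
      rw [h2k, ← Finset.prod_mul_distrib]
      refine Finset.prod_congr rfl ?_
      intro j _
      ring
    have hden : (k.factorial : ℚ) * ((n.descFactorial (n - k) : ℕ) : ℚ)
        = (n.factorial : ℚ) := by
      rw [← Nat.cast_mul, hfac k hk']
    have hkne : (k.factorial : ℚ) ≠ 0 := by positivity
    rw [div_mul_eq_mul_div, ← hden, hnum]
    simp only [hD]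
    push_cast
    field_simp
  -- Step B : p ∣ X - (-1)^e * n!
  have hdvd : (p : ℤ) ∣ X - (-1) ^ e * (n.factorial : ℤ) := by
    rw [← ZMod.intCast_zmod_eq_zero_iff_dvd, hX]
    push_cast
    rw [sub_eq_zero]
    -- compute X mod p
    have hsplit : ∑ k ∈ range (n + 1), ((O k : ZMod p)) * ((D k : ZMod p))
        = ∑ k ∈ range (K + 1), ((O k : ZMod p)) * ((D k : ZMod p)) := by
      rw [Finset.range_eq_Ico, ← Finset.sum_Ico_consecutive _ (Nat.zero_le (K + 1))
        (by omega : K + 1 ≤ n + 1), ← Finset.range_eq_Ico]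
      have hzero : ∀ k ∈ Finset.Ico (K + 1) (n + 1), ((O k : ZMod p)) * ((D k : ZMod p)) = 0 := by
        intro k hk
        obtain ⟨hk1, hk2⟩ := Finset.mem_Ico.mp hk
        have hOzero : ((O k : ℤ) : ZMod p) = 0 := by
          rw [hO]
          push_cast
          refine Finset.prod_eq_zero (Finset.mem_range.mpr (by omega : K < k)) ?_
          have : (2 : ZMod p) * ((m : ZMod p) + (K : ZMod p)) - 1 = ((p : ℕ) : ZMod p) := by
            have : ((2 * (m + K) : ℕ) : ZMod p) = ((p + 1 : ℕ) : ZMod p) := by rw [h2mK]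
            push_cast at this
            linear_combination this
          rw [this, ZMod.natCast_self]
        rw [hOzero, zero_mul]
      rw [Finset.sum_eq_zero hzero, add_zero]
    rw [hsplit]
    -- each term with k ≤ K
    have hterm : ∀ k ∈ range (K + 1), ((O k : ZMod p)) * ((D k : ZMod p))
        = (-2 : ZMod p) ^ k * (K.choose k : ZMod p) * (n.factorial : ZMod p) := by
      intro k hk
      have hkK : k ≤ K := by have := Finset.mem_range.mp hk; omega
      have hOk : ((O k : ℤ) : ZMod p) = (-2 : ZMod p) ^ k * ((K.descFactorial k : ℕ) : ZMod p) := by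
        simp only [hO]
        push_cast
        rw [Nat.descFactorial_eq_prod_range]
        push_cast
        have h2k : (-2 : ZMod p) ^ k = ∏ _j ∈ range k, (-2 : ZMod p) := by simp
        rw [h2k, ← Finset.prod_mul_distrib]
        refine Finset.prod_congr rfl ?_
        intro j hj
        have hjK : j ≤ K := by have := Finset.mem_range.mp hj; omega
        have hint : (2 * ((m : ℤ) + j) - 1) + 2 * ((K - j : ℕ) : ℤ) = (p : ℤ) := by
          push_cast [Nat.cast_sub hjK]
          have : ((2 * (m + K) : ℕ) : ℤ) = ((p + 1 : ℕ) : ℤ) := by rw [h2mK]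
          push_cast at this
          linarith
        have := congrArg (fun z : ℤ => (z : ZMod p)) hint
        push_cast at this
        rw [ZMod.natCast_self] at this
        linear_combination this
      have hDk : ((D k : ℤ) : ZMod p) = (n.descFactorial (n - k) : ZMod p) := by
        simp only [hD]; push_cast; ring
      rw [hOk, hDk]
      have hnat : K.descFactorial k * n.descFactorial (n - k) = K.choose k * n.factorial := by
        rw [Nat.descFactorial_eq_factorial_mul_choose, mul_comm (k.factorial),
          mul_assoc, hfac k (hkK.trans hKn)]
      have : ((K.descFactorial k : ℕ) : ZMod p) * (n.descFactorial (n - k) : ZMod p)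
          = (K.choose k : ZMod p) * (n.factorial : ZMod p) := by
        rw [← Nat.cast_mul, hnat, Nat.cast_mul]
      linear_combination ((-2 : ZMod p) ^ k) * this
    rw [Finset.sum_congr rfl hterm]
    rw [← Finset.sum_mul]
    have hbinom : ∑ k ∈ range (K + 1), (-2 : ZMod p) ^ k * (K.choose k : ZMod p)
        = (-1 : ZMod p) ^ K := by
      have := add_pow (-2 : ZMod p) 1 K
      norm_num at this
      rw [← this]
    rw [hbinom]
    have hparity : (-1 : ZMod p) ^ e = (-1 : ZMod p) ^ K := by
      rcases Nat.even_or_odd K with hKe | hKo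
      · have hee : Even e := by
          rw [Nat.even_iff] at hKe ⊢; omega
        rw [hee.neg_one_pow, hKe.neg_one_pow]
      · have heo : Odd e := by
          rw [Nat.odd_iff] at hKo ⊢; omega
        rw [heo.neg_one_pow, hKo.neg_one_pow]
    rw [hparity]
  obtain ⟨a, ha⟩ := hdvd
  refine ⟨a, (n.factorial : ℤ), ?_, ?_⟩
  · rw [Int.natCast_dvd_natCast]
    rw [Nat.Prime.dvd_factorial hp]
    omega
  · push_cast
    rw [sub_mul, hstepA]
    have : ((X : ℤ) : ℚ) - ((-1) ^ e * (n.factorial : ℤ) : ℤ) = ((p : ℤ) : ℚ) * a := by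
      rw [← Int.cast_sub, ha]; push_cast; ring
    push_cast at this
    rw [pow_one]
    linarith [this]
end
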